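/- Mass conservation for the linearized extrapolation (LE) scheme with discretized multiplicative noise: let Δt_{m−1}, Δt_m > 0, ε ∈ ℝ, let f̃_0, …, f̃_N be real numbers, let σ ≥ 1 be an integer, and let u^{m−1}, u^m, u^{m+1} ∈ ℂ^{N+1}. Assume that for every 0 ≤ j ≤ N one has i·(u^{m+1}_j − u^m_j)/Δt_m + D₂u^{m+1/2}_j + (1/2)·( ((2Δt_{m−1}+Δt_m)/Δt_{m−1})·|u^m_j|^{2σ} − (Δt_m/Δt_{m−1})·|u^{m−1}_j|^{2σ} )·u^{m+1/2}_j = ε·f̃_j·u^{m+1/2}_j, where u^{m+1/2}_j := (u^m_j + u^{m+1}_j)/2 (extended by the Neumann conventions). Then M_dis[u^{m+1}] = M_dis[u^m]. -/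

import Mathlib

open Finset

/-- Extended mesh size `Δx_j` for `j ∈ {-1, 0, …, N}`, with the conventions
`Δx_{-1} := Δx_0` and `Δx_N := Δx_{N-1}`. -/
noncomputable def meshDx (N : ℕ) (x : ℕ → ℝ) (j : ℤ) : ℝ :=
  if j ≤ 0 then x 1 - x 0
  else if (N : ℤ) ≤ j then x N - x (N - 1)
  else x (j.toNat + 1) - x j.toNat

/-- Neumann extension of a vector `u ∈ ℂ^{N+1}`: `u_{-1} := u_0`, `u_{N+1} := u_N`. -/
noncomputable def neumannExt (N : ℕ) (u : ℕ → ℂ) (j : ℤ) : ℂ :=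
  if j ≤ 0 then u 0
  else if (N : ℤ) ≤ j then u N
  else u j.toNat

/-- Discrete second-difference operator on the (possibly non-uniform) mesh. -/
noncomputable def D2 (N : ℕ) (x : ℕ → ℝ) (u : ℕ → ℂ) (j : ℕ) : ℂ :=
  2 * neumannExt N u ((j : ℤ) - 1) /
      ((meshDx N x ((j : ℤ) - 1) : ℂ) * ((meshDx N x ((j : ℤ) - 1) : ℂ) + (meshDx N x (j : ℤ) : ℂ)))
    - 2 * neumannExt N u (j : ℤ) / ((meshDx N x ((j : ℤ) - 1) : ℂ) * (meshDx N x (j : ℤ) : ℂ))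
    + 2 * neumannExt N u ((j : ℤ) + 1) /
      (((meshDx N x ((j : ℤ) - 1) : ℂ) + (meshDx N x (j : ℤ) : ℂ)) * (meshDx N x (j : ℤ) : ℂ))

/-- Discrete mass `M_dis[u] = (1/2)·Σ_{j=0}^{N} |u_j|²·(Δx_j + Δx_{j-1})`. -/
noncomputable def Mdis (N : ℕ) (x : ℕ → ℝ) (u : ℕ → ℂ) : ℝ :=
  (1 / 2) * ∑ j ∈ Finset.range (N + 1),
    ‖u j‖ ^ 2 * (meshDx N x (j : ℤ) + meshDx N x ((j : ℤ) - 1))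

lemma meshDx_pos (N : ℕ) (hN : 1 ≤ N) (x : ℕ → ℝ) (hx : ∀ j, j < N → x j < x (j + 1))
    (j : ℤ) : 0 < meshDx N x j := by
  unfold meshDx
  split_ifs with h1 h2
  · have := hx 0 hN; simpa using this
  · have h3 : N - 1 < N := by omega
    have := hx (N-1) h3
    have he : N - 1 + 1 = N := by omega
    rw [he] at this
    linarith
  · have hj : j.toNat < N := by omega
    have := hx j.toNat hj
    linarith

lemma neumannExt_natCast (N : ℕ) (u : ℕ → ℂ) (k : ℕ) (hk : k ≤ N) :
    neumannExt N u (k : ℤ) = u k := by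
  unfold neumannExt
  split_ifs with h1 h2
  · have : k = 0 := by omega
    rw [this]
  · have : k = N := by omega
    rw [this]
  · simp

lemma im_key (a b : ℂ) (t : ℝ) (ht : t ≠ 0) :
    ((starRingEnd ℂ) ((a + b) / 2) * (Complex.I * (b - a) / (t : ℂ))).im
      = (Complex.normSq b - Complex.normSq a) / (2 * t) := by
  rcases a with ⟨x, y⟩
  rcases b with ⟨z, w⟩
  simp [Complex.div_im, Complex.mul_im, Complex.mul_re, Complex.normSq_apply,
    Complex.div_re, Complex.normSq_apply]
  field_simp
  ring

lemma im_conj_smul (c z : ℂ) (hc : c.im = 0) : ((starRingEnd ℂ) z * (c * z)).im = 0 := by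
  have h : (starRingEnd ℂ) z * (c * z) = c * (z * (starRingEnd ℂ) z) := by ring
  rw [h, Complex.mul_conj]
  simp [Complex.mul_im, hc]

lemma im_term (d : ℂ) (r : ℝ) : ((-(starRingEnd ℂ) d) * (d / (r : ℂ))).im = 0 := by
  have h : (-(starRingEnd ℂ) d) * (d / (r : ℂ)) = -((d * (starRingEnd ℂ) d) / (r : ℂ)) := by
    ring
  rw [h, Complex.mul_conj]
  rw [← Complex.ofReal_div]
  simp

lemma D2_weighted (N : ℕ) (hN : 1 ≤ N) (x : ℕ → ℝ) (hx : ∀ j, j < N → x j < x (j + 1))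
    (u : ℕ → ℂ) (j : ℕ) :
    ((meshDx N x ((j : ℤ) - 1) + meshDx N x (j : ℤ) : ℝ) : ℂ) * D2 N x u j
      = 2 * ((neumannExt N u ((j : ℤ) + 1) - neumannExt N u (j : ℤ)) / (meshDx N x (j : ℤ) : ℂ)
          - (neumannExt N u (j : ℤ) - neumannExt N u ((j : ℤ) - 1)) / (meshDx N x ((j : ℤ) - 1) : ℂ)) := by
  have hp := meshDx_pos N hN x hx ((j : ℤ) - 1)
  have hq := meshDx_pos N hN x hx (j : ℤ)
  have hp' : (meshDx N x ((j : ℤ) - 1) : ℂ) ≠ 0 := by exact_mod_cast hp.ne'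
  have hq' : (meshDx N x (j : ℤ) : ℂ) ≠ 0 := by exact_mod_cast hq.ne'
  have hpq : (meshDx N x ((j : ℤ) - 1) : ℂ) + (meshDx N x (j : ℤ) : ℂ) ≠ 0 := by
    have h0 : (0:ℝ) < meshDx N x ((j : ℤ) - 1) + meshDx N x (j : ℤ) := by linarith
    push_cast
    exact_mod_cast h0.ne'
  unfold D2
  push_cast
  field_simp
  ring


/-- Mass conservation for the linearized extrapolation (LE) scheme with discretized
multiplicative noise. -/
theorem le_scheme_mass_conservation
    (N : ℕ) (hN : 1 ≤ N) (x : ℕ → ℝ) (hx : ∀ j, j < N → x j < x (j + 1))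
    (Δtm1 Δtm : ℝ) (hΔtm1 : 0 < Δtm1) (hΔtm : 0 < Δtm) (ε : ℝ) (ftilde : ℕ → ℝ)
    (σ : ℕ) (hσ : 1 ≤ σ) (um1 um up1 : ℕ → ℂ)
    (hscheme : ∀ j ≤ N,
      Complex.I * (up1 j - um j) / (Δtm : ℂ)
        + D2 N x (fun k => (um k + up1 k) / 2) j
        + (((1 / 2) * (((2 * Δtm1 + Δtm) / Δtm1) * ‖um j‖ ^ (2 * σ)
              - (Δtm / Δtm1) * ‖um1 j‖ ^ (2 * σ)) : ℝ) : ℂ) * ((um j + up1 j) / 2)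
      = (ε : ℂ) * (ftilde j : ℂ) * ((um j + up1 j) / 2)) :
    Mdis N x up1 = Mdis N x um := by
  set v : ℕ → ℂ := fun k => (um k + up1 k) / 2 with hv
  set g : ℕ → ℂ := fun k =>
    (neumannExt N v ((k : ℤ) + 1) - neumannExt N v (k : ℤ)) / (meshDx N x (k : ℤ) : ℂ) with hg
  -- weighted D2 in telescoping form
  have keyD2 : ∀ j : ℕ, j ≤ N →
      ((meshDx N x ((j : ℤ) - 1) + meshDx N x (j : ℤ) : ℝ) : ℂ) * D2 N x v j
        = 2 * (g j - (if j = 0 then 0 else g (j - 1))) := by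
    intro j hj
    rw [D2_weighted N hN x hx v j]
    rcases Nat.eq_zero_or_pos j with h0 | h0
    · subst h0
      simp only [if_pos rfl, Nat.cast_zero, zero_sub]
      have e1 : neumannExt N v (-1 : ℤ) = neumannExt N v (0 : ℤ) := by
        unfold neumannExt; norm_num
      rw [e1]
      simp [hg, sub_self]
    · have hj0 : j ≠ 0 := by omega
      rw [if_neg hj0]
      have e1 : ((j : ℤ) - 1) = ((j - 1 : ℕ) : ℤ) := by omega
      have e2 : ((j - 1 : ℕ) : ℤ) + 1 = (j : ℤ) := by omega
      simp only [hg, e2, e1]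
  -- imaginary part of each scheme equation
  have keyIm : ∀ j : ℕ, j ≤ N →
      (Complex.normSq (up1 j) - Complex.normSq (um j)) / (2 * Δtm)
        = -((starRingEnd ℂ) (v j) * D2 N x v j).im := by
    intro j hj
    have e := hscheme j hj
    have e2 := congrArg (fun z => ((starRingEnd ℂ) (v j) * z).im) e
    simp only [mul_add, Complex.add_im] at e2
    have h1 : ((starRingEnd ℂ) (v j) * (Complex.I * (up1 j - um j) / (Δtm : ℂ))).im
        = (Complex.normSq (up1 j) - Complex.normSq (um j)) / (2 * Δtm) := by
      exact im_key (um j) (up1 j) Δtm hΔtm.ne'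
    have h3 : ((starRingEnd ℂ) (v j) *
        ((((1 / 2) * (((2 * Δtm1 + Δtm) / Δtm1) * ‖um j‖ ^ (2 * σ)
              - (Δtm / Δtm1) * ‖um1 j‖ ^ (2 * σ)) : ℝ) : ℂ) * ((um j + up1 j) / 2))).im = 0 := by
      exact im_conj_smul _ (v j) (Complex.ofReal_im _)
    have h4 : ((starRingEnd ℂ) (v j) * ((ε : ℂ) * (ftilde j : ℂ) * ((um j + up1 j) / 2))).im = 0 := by
      have : ((ε : ℂ) * (ftilde j : ℂ)).im = 0 := by simp
      exact im_conj_smul _ (v j) this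
    rw [h1, h3, h4] at e2
    linarith [e2]
  -- the weighted-D2 sum is real
  have Ssum : (∑ j ∈ Finset.range (N + 1),
      ((meshDx N x ((j : ℤ) - 1) + meshDx N x (j : ℤ) : ℝ) : ℂ) *
        ((starRingEnd ℂ) (v j) * D2 N x v j)).im = 0 := by
    have hrw : ∀ j ∈ Finset.range (N + 1),
        ((meshDx N x ((j : ℤ) - 1) + meshDx N x (j : ℤ) : ℝ) : ℂ) *
          ((starRingEnd ℂ) (v j) * D2 N x v j)
        = (starRingEnd ℂ) (v j) * (2 * (g j - (if j = 0 then 0 else g (j - 1)))) := by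
      intro j hjm
      have hj : j ≤ N := by simpa [Finset.mem_range, Nat.lt_succ_iff] using hjm
      rw [← keyD2 j hj]; ring
    rw [Finset.sum_congr rfl hrw]
    have gN : g N = 0 := by
      have e1 : neumannExt N v ((N : ℤ) + 1) = v N := by
        unfold neumannExt
        have : ¬ ((N : ℤ) + 1 ≤ 0) := by omega
        rw [if_neg this, if_pos (by omega)]
      have e2 : neumannExt N v (N : ℤ) = v N := neumannExt_natCast N v N le_rfl
      simp [hg, e1, e2]
    have expand : ∑ j ∈ Finset.range (N + 1),
        (starRingEnd ℂ) (v j) * (2 * (g j - (if j = 0 then 0 else g (j - 1))))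
        = 2 * ∑ j ∈ Finset.range N,
            ((starRingEnd ℂ) (v j) - (starRingEnd ℂ) (v (j + 1))) * g j := by
      have lhs_eq : ∑ j ∈ Finset.range (N + 1),
          (starRingEnd ℂ) (v j) * (2 * (g j - (if j = 0 then 0 else g (j - 1))))
          = 2 * (∑ j ∈ Finset.range (N + 1), (starRingEnd ℂ) (v j) * g j
              - ∑ j ∈ Finset.range (N + 1),
                  (starRingEnd ℂ) (v j) * (if j = 0 then 0 else g (j - 1))) := by
        rw [← Finset.sum_sub_distrib, Finset.mul_sum]
        apply Finset.sum_congr rfl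
        intro j _
        ring
      rw [lhs_eq]
      have s1 : ∑ j ∈ Finset.range (N + 1), (starRingEnd ℂ) (v j) * g j
          = ∑ j ∈ Finset.range N, (starRingEnd ℂ) (v j) * g j := by
        rw [Finset.sum_range_succ, gN]
        simp
      have s2 : ∑ j ∈ Finset.range (N + 1),
            (starRingEnd ℂ) (v j) * (if j = 0 then 0 else g (j - 1))
          = ∑ j ∈ Finset.range N, (starRingEnd ℂ) (v (j + 1)) * g j := by
        rw [Finset.sum_range_succ']
        simp
      rw [s1, s2, ← Finset.sum_sub_distrib]
      congr 1
      apply Finset.sum_congr rfl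
      intro j _
      ring
    rw [expand]
    rw [Complex.mul_im]
    have : (∑ j ∈ Finset.range N,
        ((starRingEnd ℂ) (v j) - (starRingEnd ℂ) (v (j + 1))) * g j).im = 0 := by
      rw [Complex.im_sum]
      apply Finset.sum_eq_zero
      intro j hjm
      have hj : j < N := Finset.mem_range.mp hjm
      have e1 : neumannExt N v ((j : ℤ) + 1) = v (j + 1) := by
        have : ((j : ℤ) + 1) = ((j + 1 : ℕ) : ℤ) := by push_cast; ring
        rw [this]
        exact neumannExt_natCast N v (j + 1) (by omega)
      have e2 : neumannExt N v (j : ℤ) = v j := neumannExt_natCast N v j (by omega)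
      have hterm : ((starRingEnd ℂ) (v j) - (starRingEnd ℂ) (v (j + 1))) * g j
          = (-(starRingEnd ℂ) (v (j + 1) - v j)) * ((v (j + 1) - v j) / (meshDx N x (j : ℤ) : ℂ)) := by
        simp only [hg, e1, e2, map_sub]
        ring
      rw [hterm]
      exact im_term _ _
    have : (∑ j ∈ Finset.range N,
        ((starRingEnd ℂ) (v j) - (starRingEnd ℂ) (v (j + 1))) * g j).re * (2:ℂ).im
        + (2:ℂ).re * (∑ j ∈ Finset.range N,
        ((starRingEnd ℂ) (v j) - (starRingEnd ℂ) (v (j + 1))) * g j).im = 0 := by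
      simp [this]
    linarith [this]
  -- put everything together
  have habs : ∀ u : ℕ → ℂ, ∀ j : ℕ, ‖u j‖ ^ 2 = Complex.normSq (u j) := by
    intro u j
    rw [← Complex.sq_norm]
  have main : ∑ j ∈ Finset.range (N + 1),
      (Complex.normSq (up1 j) - Complex.normSq (um j)) *
        (meshDx N x ((j : ℤ) - 1) + meshDx N x (j : ℤ)) = 0 := by
    have step : ∀ j ∈ Finset.range (N + 1),
        (Complex.normSq (up1 j) - Complex.normSq (um j)) *
          (meshDx N x ((j : ℤ) - 1) + meshDx N x (j : ℤ))
        = (-(2 * Δtm)) * ((meshDx N x ((j : ℤ) - 1) + meshDx N x (j : ℤ)) *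
            ((starRingEnd ℂ) (v j) * D2 N x v j).im) := by
      intro j hjm
      have hj : j ≤ N := by simpa [Finset.mem_range, Nat.lt_succ_iff] using hjm
      have := keyIm j hj
      have hne : (2 * Δtm) ≠ 0 := by positivity
      rw [div_eq_iff hne] at this
      rw [this]
      ring
    rw [Finset.sum_congr rfl step, ← Finset.mul_sum]
    have : ∑ j ∈ Finset.range (N + 1),
        (meshDx N x ((j : ℤ) - 1) + meshDx N x (j : ℤ)) *
          ((starRingEnd ℂ) (v j) * D2 N x v j).im = 0 := by
      have := Ssum
      rw [Complex.im_sum] at this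
      rw [← this]
      apply Finset.sum_congr rfl
      intro j _
      simp [Complex.mul_im]
    rw [this, mul_zero]
  unfold Mdis
  have final : ∑ j ∈ Finset.range (N + 1),
      ‖up1 j‖ ^ 2 * (meshDx N x (j : ℤ) + meshDx N x ((j : ℤ) - 1))
      = ∑ j ∈ Finset.range (N + 1),
      ‖um j‖ ^ 2 * (meshDx N x (j : ℤ) + meshDx N x ((j : ℤ) - 1)) := by
    have := main
    rw [← sub_eq_zero, ← Finset.sum_sub_distrib]
    rw [← this]
    apply Finset.sum_congr rfl
    intro j _
    rw [habs up1 j, habs um j]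
    ring
  rw [final]
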